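/- arXiv:2605.17861 — 2 statements merged into one kernel-verified Lean document; each statement's English description precedes it below -/
import Mathlib

section
/- Let n ≥ 1 be a natural number and R > 1 a real number. Suppose f : ℂ → ℂ has a power series expansion f(z) = ∑_{j=0}^∞ a_j z^j valid on the open ball {z : |z| < R}, and φ : ℂ → ℂⁿ has a power series expansion φ(z) = ∑_{j=0}^∞ c_j z^j valid on the open unit ball {z : |z| < 1}. Then for every natural number k the series ∑_{j=0}^∞ |a_{j+k}| · ‖c_j‖ converges, and moreover the series ∑_{k=0}^∞ ‖∑_{j=0}^∞ a_{j+k} · \overline{c_j}‖² converges, where \overline{c_j} ∈ ℂⁿ denotes the componentwise complex conjugate of c_j and ℂⁿ carries the Euclidean norm. -/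
/-- Componentwise complex conjugate of a vector in `ℂⁿ`. -/
noncomputable def conjVec {n : ℕ} (v : EuclideanSpace ℂ (Fin n)) : EuclideanSpace ℂ (Fin n) :=
  WithLp.toLp 2 (fun i => starRingEnd ℂ (v i))

lemma norm_conjVec {n : ℕ} (v : EuclideanSpace ℂ (Fin n)) : ‖conjVec v‖ = ‖v‖ := by
  simp [EuclideanSpace.norm_eq, conjVec]

theorem stmt0 (n : ℕ) (hn : 1 ≤ n) (R : ℝ) (hR : 1 < R)
    (f : ℂ → ℂ) (a : ℕ → ℂ)
    (hf : ∀ z : ℂ, ‖z‖ < R → HasSum (fun j : ℕ => a j * z ^ j) (f z))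
    (φ : ℂ → EuclideanSpace ℂ (Fin n)) (c : ℕ → EuclideanSpace ℂ (Fin n))
    (hφ : ∀ z : ℂ, ‖z‖ < 1 → HasSum (fun j : ℕ => z ^ j • c j) (φ z)) :
    (∀ k : ℕ, Summable fun j : ℕ => ‖a (j + k)‖ * ‖c j‖) ∧
      Summable fun k : ℕ => ‖∑' j : ℕ, a (j + k) • conjVec (c j)‖ ^ 2 := by
  set r : ℝ := (R + 1) / 2 with hrdef
  have hr1 : 1 < r := by simp [hrdef]; linarith
  have hr0 : 0 < r := by linarith
  have hrR : r < R := by simp [hrdef]; linarith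
  set t : ℝ := (1 + 1 / r) / 2 with htdef
  have hir : 1 / r < 1 := by
    rw [div_lt_one hr0]; exact hr1
  have hir0 : 0 < 1 / r := by positivity
  have ht1 : t < 1 := by rw [htdef, div_lt_one two_pos]; linarith
  have htr : 1 / r < t := by rw [htdef, lt_div_iff₀ two_pos]; linarith
  have ht0 : 0 < t := by linarith
  -- bound on a
  have hsa : Summable fun j : ℕ => a j * (r : ℂ) ^ j := by
    refine (hf (r : ℂ) ?_).summable
    rwa [Complex.norm_real, Real.norm_eq_abs, abs_of_pos hr0]
  obtain ⟨C, hC⟩ := (hsa.tendsto_atTop_zero.norm.bddAbove_range).imp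
    (fun C hC => fun j => hC ⟨j, rfl⟩)
  have hC' : ∀ j : ℕ, ‖a j‖ ≤ C * (1 / r) ^ j := by
    intro j
    have h := hC j
    rw [norm_mul, norm_pow, Complex.norm_real, Real.norm_eq_abs, abs_of_pos hr0] at h
    have hrj : (0:ℝ) < r ^ j := by positivity
    rw [div_pow, one_pow, mul_one_div, le_div_iff₀ hrj]
    simpa using h
  -- bound on c
  have hsc : Summable fun j : ℕ => ((t : ℂ)) ^ j • c j := by
    refine (hφ (t : ℂ) ?_).summable
    rwa [Complex.norm_real, Real.norm_eq_abs, abs_of_pos ht0]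
  obtain ⟨M, hM⟩ := (hsc.tendsto_atTop_zero.norm.bddAbove_range).imp
    (fun M hM => fun j => hM ⟨j, rfl⟩)
  have hM' : ∀ j : ℕ, ‖c j‖ ≤ M * (1 / t) ^ j := by
    intro j
    have h := hM j
    rw [norm_smul, norm_pow, Complex.norm_real, Real.norm_eq_abs, abs_of_pos ht0] at h
    have htj : (0:ℝ) < t ^ j := by positivity
    rw [div_pow, one_pow, mul_one_div, le_div_iff₀ htj]
    simpa [mul_comm] using h
  have hC0 : 0 ≤ C := le_trans (norm_nonneg (a 0)) (by simpa using hC 0)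
  have hM0 : 0 ≤ M := le_trans (norm_nonneg (c 0)) (by simpa using hM 0)
  set q : ℝ := (1 / r) * (1 / t) with hqdef
  have hq0 : 0 ≤ q := by positivity
  have hq1 : q < 1 := by
    calc q < t * (1/t) := by
            apply mul_lt_mul_of_pos_right htr (by positivity)
      _ = 1 := by field_simp
  have key : ∀ k j : ℕ, ‖a (j + k)‖ * ‖c j‖ ≤ (C * M * (1 / r) ^ k) * q ^ j := by
    intro k j
    have h1 : ‖a (j + k)‖ ≤ C * (1 / r) ^ (j + k) := hC' (j + k)
    have h2 : ‖c j‖ ≤ M * (1 / t) ^ j := hM' j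
    calc ‖a (j + k)‖ * ‖c j‖
        ≤ (C * (1 / r) ^ (j + k)) * (M * (1 / t) ^ j) := by
          apply mul_le_mul h1 h2 (norm_nonneg _) (by positivity)
      _ = (C * M * (1 / r) ^ k) * q ^ j := by
          rw [hqdef, pow_add, mul_pow]; ring
  have hgeo : Summable fun j : ℕ => q ^ j := summable_geometric_of_lt_one hq0 hq1
  have part1 : ∀ k : ℕ, Summable fun j : ℕ => ‖a (j + k)‖ * ‖c j‖ := by
    intro k
    refine Summable.of_nonneg_of_le (fun j => by positivity) (key k) ?_
    exact hgeo.mul_left _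
  refine ⟨part1, ?_⟩
  set S : ℝ := ∑' j : ℕ, q ^ j with hSdef
  have hS0 : 0 ≤ S := tsum_nonneg fun j => by positivity
  have hbound : ∀ k : ℕ, ‖∑' j : ℕ, a (j + k) • conjVec (c j)‖ ≤ (C * M * S) * (1 / r) ^ k := by
    intro k
    have heq : ∀ j : ℕ, ‖a (j + k) • conjVec (c j)‖ = ‖a (j + k)‖ * ‖c j‖ := by
      intro j; rw [norm_smul, norm_conjVec]
    have hsumm : Summable fun j : ℕ => ‖a (j + k) • conjVec (c j)‖ := by
      simpa [heq] using part1 k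
    calc ‖∑' j : ℕ, a (j + k) • conjVec (c j)‖
        ≤ ∑' j : ℕ, ‖a (j + k) • conjVec (c j)‖ := norm_tsum_le_tsum_norm hsumm
      _ ≤ ∑' j : ℕ, (C * M * (1 / r) ^ k) * q ^ j := by
          apply Summable.tsum_le_tsum _ hsumm (hgeo.mul_left _)
          intro j; rw [heq]; exact key k j
      _ = (C * M * (1 / r) ^ k) * S := by rw [tsum_mul_left]
      _ = (C * M * S) * (1 / r) ^ k := by ring
  refine Summable.of_nonneg_of_le (fun k => by positivity)
    (fun k => ?_) (((summable_geometric_of_lt_one (by positivity)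
      (by nlinarith [hir, hir0] : (1 / r) ^ 2 < 1)).mul_left ((C * M * S) ^ 2)))
  calc ‖∑' j : ℕ, a (j + k) • conjVec (c j)‖ ^ 2
      ≤ ((C * M * S) * (1 / r) ^ k) ^ 2 := by
        apply pow_le_pow_left₀ (norm_nonneg _) (hbound k)
    _ = (C * M * S) ^ 2 * ((1 / r) ^ 2) ^ k := by rw [mul_pow, ← pow_mul, ← pow_mul, Nat.mul_comm]
end

section
/- Let n ≥ 1 and m ≥ 1 be natural numbers, let λ ∈ ℂ with |λ| < 1, and let c : ℕ → ℂⁿ be such that the series ∑_{j=0}^∞ ‖c_j‖·|λ|^j converges. Define â : ℕ → ℂ by â_j = \overline{λ}^{j−m} if j ≥ m and â_j = 0 if j < m. Then ∑_{k=0}^∞ |â_k|² + ∑_{k=0}^∞ ‖∑_{j=0}^∞ â_{j+k} · \overline{c_j}‖² = (1 + ‖∑_{j=0}^∞ \overline{λ}^j · \overline{c_j}‖²) / (1 − |λ|²) + ∑_{k=0}^{m−1} ‖∑_{j=0}^∞ \overline{λ}^j · \overline{c_{j+m−k}}‖², and all series appearing converge. -/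
lemma aux_summable (r : ℝ) (hr0 : 0 ≤ r) (c' : ℕ → ℝ)
    (hc : Summable fun j => c' j * r ^ j) (d : ℕ) :
    Summable fun j => c' (j + d) * r ^ j := by
  rcases eq_or_lt_of_le hr0 with h0 | hpos
  · apply summable_of_ne_finset_zero (s := {0})
    intro j hj
    have hj0 : j ≠ 0 := by simpa using hj
    simp [← h0, zero_pow hj0]
  · have h1 : Summable fun j => c' (j + d) * r ^ (j + d) :=
      (summable_nat_add_iff d).2 hc
    have h2 := h1.mul_right (r ^ d)⁻¹
    refine h2.congr fun j => ?_
    have hrd : (r : ℝ) ^ d ≠ 0 := pow_ne_zero d hpos.ne'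
    rw [pow_add]
    field_simp

theorem stmt16 (n : ℕ) (hn : 1 ≤ n) (m : ℕ) (hm : 1 ≤ m) (l : ℂ) (hl : ‖l‖ < 1)
    (c : ℕ → EuclideanSpace ℂ (Fin n))
    (hc : Summable fun j : ℕ => ‖c j‖ * ‖l‖ ^ j)
    (f : ℕ → ℂ)
    (hf : ∀ j : ℕ, f j = if m ≤ j then (starRingEnd ℂ l) ^ (j - m) else 0) :
    (Summable fun k : ℕ => ‖f k‖ ^ 2) ∧
    (∀ k : ℕ, Summable fun j : ℕ => f (j + k) • conjVec (c j)) ∧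
    (Summable fun k : ℕ => ‖∑' j : ℕ, f (j + k) • conjVec (c j)‖ ^ 2) ∧
    (Summable fun j : ℕ => (starRingEnd ℂ l) ^ j • conjVec (c j)) ∧
    (∀ k : ℕ, k < m → Summable fun j : ℕ => (starRingEnd ℂ l) ^ j • conjVec (c (j + m - k))) ∧
    ((∑' k : ℕ, ‖f k‖ ^ 2) +
        ∑' k : ℕ, ‖∑' j : ℕ, f (j + k) • conjVec (c j)‖ ^ 2 =
      (1 + ‖∑' j : ℕ, (starRingEnd ℂ l) ^ j • conjVec (c j)‖ ^ 2) / (1 - ‖l‖ ^ 2) +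
        ∑ k ∈ Finset.range m,
          ‖∑' j : ℕ, (starRingEnd ℂ l) ^ j • conjVec (c (j + m - k))‖ ^ 2) := by
  set μ : ℂ := starRingEnd ℂ l with hμ
  set r : ℝ := ‖l‖ with hrdef
  have hμabs : ‖μ‖ = r := Complex.norm_conj l
  have hr0 : (0:ℝ) ≤ r := norm_nonneg l
  have hr1 : r < 1 := hl
  have hr2 : r ^ 2 < 1 := by nlinarith
  have hr20 : (0:ℝ) ≤ r ^ 2 := sq_nonneg r
  have h1r2 : (0:ℝ) < 1 - r ^ 2 := by linarith
  -- norm of basic term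
  have hnorm : ∀ (d j : ℕ), ‖μ ^ j • conjVec (c (j + d))‖ = ‖c (j + d)‖ * r ^ j := by
    intro d j
    rw [norm_smul, norm_conjVec, norm_pow, hμabs, mul_comm]
  -- summability of shifted base series
  have hU : ∀ d : ℕ, Summable fun j : ℕ => μ ^ j • conjVec (c (j + d)) := by
    intro d
    apply Summable.of_norm
    exact (aux_summable r hr0 (fun j => ‖c j‖) hc d).congr fun j => (hnorm d j).symm
  have hT : Summable fun j : ℕ => μ ^ j • conjVec (c j) :=
    (hU 0).congr fun j => by simp
  set S : EuclideanSpace ℂ (Fin n) := ∑' j : ℕ, μ ^ j • conjVec (c j) with hS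
  -- branch k ≥ m : A k = μ^(k-m) • T
  have hA_ge : ∀ k : ℕ, m ≤ k →
      (fun j : ℕ => f (j + k) • conjVec (c j)) =
      fun j : ℕ => μ ^ (k - m) • (μ ^ j • conjVec (c j)) := by
    intro k hk
    funext j
    rw [hf (j + k), if_pos (by omega), smul_smul, ← pow_add]
    congr 2
    omega
  have hA_ge_sum : ∀ k : ℕ, m ≤ k →
      Summable (fun j : ℕ => f (j + k) • conjVec (c j)) := by
    intro k hk
    rw [hA_ge k hk]
    exact hT.const_smul _
  have hA_ge_tsum : ∀ k : ℕ, m ≤ k →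
      (∑' j : ℕ, f (j + k) • conjVec (c j)) = μ ^ (k - m) • S := by
    intro k hk
    rw [hA_ge k hk]
    exact (hT.hasSum.const_smul _).tsum_eq
  -- branch k < m
  have hA_lt_zero : ∀ k : ℕ, k < m → ∀ j : ℕ, j < m - k →
      f (j + k) • conjVec (c j) = (0 : EuclideanSpace ℂ (Fin n)) := by
    intro k hk j hj
    rw [hf (j + k), if_neg (by omega), zero_smul]
  have hA_lt_shift : ∀ k : ℕ, k < m →
      (fun j : ℕ => f (j + (m - k) + k) • conjVec (c (j + (m - k)))) =
      fun j : ℕ => μ ^ j • conjVec (c (j + (m - k))) := by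
    intro k hk
    funext j
    rw [hf (j + (m - k) + k), if_pos (by omega)]
    congr 2
    omega
  have hA_lt_sum : ∀ k : ℕ, k < m →
      Summable (fun j : ℕ => f (j + k) • conjVec (c j)) := by
    intro k hk
    apply (summable_nat_add_iff (m - k)).1
    have := hU (m - k)
    refine this.congr fun j => ?_
    exact congrFun (hA_lt_shift k hk).symm j
  have hA_lt_tsum : ∀ k : ℕ, k < m →
      (∑' j : ℕ, f (j + k) • conjVec (c j)) = ∑' j : ℕ, μ ^ j • conjVec (c (j + (m - k))) := by
    intro k hk
    rw [← Summable.sum_add_tsum_nat_add (m - k) (hA_lt_sum k hk)]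
    rw [Finset.sum_eq_zero fun j hj => hA_lt_zero k hk j (Finset.mem_range.1 hj), zero_add]
    exact tsum_congr fun j => congrFun (hA_lt_shift k hk) j
  have hA_sum : ∀ k : ℕ, Summable (fun j : ℕ => f (j + k) • conjVec (c j)) := by
    intro k
    rcases lt_or_ge k m with h | h
    · exact hA_lt_sum k h
    · exact hA_ge_sum k h
  -- |f|^2 series
  have hf2_shift : ∀ k : ℕ, ‖f (k + m)‖ ^ 2 = (r ^ 2) ^ k := by
    intro k
    rw [hf (k + m), if_pos (by omega)]
    have : k + m - m = k := by omega
    rw [this, norm_pow, hμabs, ← pow_mul, ← pow_mul, mul_comm]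
  have hf2_zero : ∀ k : ℕ, k < m → ‖f k‖ ^ 2 = 0 := by
    intro k hk
    rw [hf k, if_neg (by omega)]
    simp
  have hgeo : Summable fun k : ℕ => (r ^ 2) ^ k := summable_geometric_of_lt_one hr20 hr2
  have hf2_sum : Summable fun k : ℕ => ‖f k‖ ^ 2 := by
    apply (summable_nat_add_iff m).1
    exact hgeo.congr fun k => (hf2_shift k).symm
  have hf2_tsum : (∑' k : ℕ, ‖f k‖ ^ 2) = 1 / (1 - r ^ 2) := by
    rw [← Summable.sum_add_tsum_nat_add m hf2_sum,
      Finset.sum_eq_zero fun k hk => hf2_zero k (Finset.mem_range.1 hk), zero_add]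
    rw [tsum_congr hf2_shift, tsum_geometric_of_lt_one hr20 hr2, one_div]
  -- F series
  have hF_shift : ∀ k : ℕ,
      ‖∑' j : ℕ, f (j + (k + m)) • conjVec (c j)‖ ^ 2 = (r ^ 2) ^ k * ‖S‖ ^ 2 := by
    intro k
    rw [hA_ge_tsum (k + m) (by omega), norm_smul, norm_pow, hμabs]
    have : k + m - m = k := by omega
    rw [this, mul_pow, ← pow_mul, ← pow_mul, mul_comm 2 k]
  have hF_sum : Summable fun k : ℕ => ‖∑' j : ℕ, f (j + k) • conjVec (c j)‖ ^ 2 := by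
    apply (summable_nat_add_iff m).1
    exact (hgeo.mul_right (‖S‖ ^ 2)).congr fun k => (hF_shift k).symm
  have hF_tsum : (∑' k : ℕ, ‖∑' j : ℕ, f (j + k) • conjVec (c j)‖ ^ 2) =
      (∑ k ∈ Finset.range m, ‖∑' j : ℕ, μ ^ j • conjVec (c (j + (m - k)))‖ ^ 2) +
        ‖S‖ ^ 2 / (1 - r ^ 2) := by
    rw [← Summable.sum_add_tsum_nat_add m hF_sum]
    congr 1
    · refine Finset.sum_congr rfl fun k hk => ?_
      rw [hA_lt_tsum k (Finset.mem_range.1 hk)]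
    · rw [tsum_congr hF_shift, tsum_mul_right, tsum_geometric_of_lt_one hr20 hr2]
      rw [div_eq_mul_inv, mul_comm]
  -- fifth conjunct shape
  have hU' : ∀ k : ℕ, k < m → Summable fun j : ℕ => μ ^ j • conjVec (c (j + m - k)) := by
    intro k hk
    have h : ∀ j : ℕ, j + m - k = j + (m - k) := fun j => by omega
    exact (hU (m - k)).congr fun j => by rw [h j]
  have hshape : ∀ k : ℕ, k < m →
      (∑' j : ℕ, μ ^ j • conjVec (c (j + (m - k)))) = ∑' j : ℕ, μ ^ j • conjVec (c (j + m - k)) := by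
    intro k hk
    have h : ∀ j : ℕ, j + m - k = j + (m - k) := fun j => by omega
    exact tsum_congr fun j => by rw [h j]
  refine ⟨hf2_sum, hA_sum, hF_sum, hT, hU', ?_⟩
  rw [hf2_tsum, hF_tsum]
  rw [Finset.sum_congr rfl fun k hk => by rw [hshape k (Finset.mem_range.1 hk)]]
  field_simp
  ring
end
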